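/- For d ≥ 2 and r ∈ [0,∞), the function g(r) = σ_{d-1} ∫_0^π (cos θ · sin^{d-2} θ)/(r² + 1 − 2r cos θ)^{(d−2+α)/2} dθ can be rewritten, via integration by parts, as g(r) = σ_{d-1} · r · ((d−2+α)/(d−1)) · ∫_0^π sin^d θ / (r² + 1 − 2r cos θ)^{(d+α)/2} dθ. -/

import Mathlib

open Real MeasureTheory intervalIntegral Set Filter

namespace Stmt0Aux

lemma w_nonneg (r θ : ℝ) : 0 ≤ r^2 + 1 - 2*r*Real.cos θ := by
  nlinarith [Real.sin_sq_add_cos_sq θ, sq_nonneg (r - Real.cos θ)]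

lemma w_pos_of_ne {r : ℝ} (hr : 0 ≤ r) (hr1 : r ≠ 1) (θ : ℝ) :
    0 < r^2 + 1 - 2*r*Real.cos θ := by
  have h1 : Real.cos θ ≤ 1 := Real.cos_le_one θ
  have h0 : (1:ℝ) - r ≠ 0 := fun h => hr1 (by linarith)
  have h2 : 0 < (1-r)^2 := by positivity
  nlinarith [mul_nonneg hr (sub_nonneg.mpr h1)]

lemma w_pos_of_pos {r : ℝ} (hr : 0 ≤ r) {θ : ℝ} (h : Real.cos θ < 1) :
    0 < r^2 + 1 - 2*r*Real.cos θ := by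
  rcases hr.lt_or_eq with h' | h'
  · nlinarith [sq_nonneg (1-r), mul_pos h' (sub_pos.mpr h)]
  · nlinarith

lemma cos_lt_one_of_mem {θ : ℝ} (h1 : 0 < θ) (h2 : θ ≤ π) : Real.cos θ < 1 := by
  have := Real.cos_le_one_sub_mul_cos_sq (x := θ) (by rw [abs_of_pos h1]; exact h2)
  have hp : 0 < 2 / π ^ 2 * θ ^ 2 := by positivity
  linarith


lemma ibp (k : ℕ) (α r : ℝ) (ε : ℝ) (hεπ : ε ≤ π)
    (hw : ∀ θ ∈ Icc ε π, 0 < r^2 + 1 - 2*r*Real.cos θ) :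
    ∫ θ in ε..π, Real.cos θ * Real.sin θ ^ k * (r^2 + 1 - 2*r*Real.cos θ) ^ (-(((k:ℝ)+α)/2))
    = -(Real.sin ε ^ (k+1) * (r^2 + 1 - 2*r*Real.cos ε) ^ (-(((k:ℝ)+α)/2)) / ((k:ℝ)+1))
      + r * ((k:ℝ)+α) / ((k:ℝ)+1) *
        ∫ θ in ε..π, Real.sin θ ^ (k+2) * (r^2 + 1 - 2*r*Real.cos θ) ^ (-(((k:ℝ)+2+α)/2)) := by
  set c : ℝ := -(((k:ℝ)+α)/2) with hc
  have hc1 : c - 1 = -(((k:ℝ)+2+α)/2) := by rw [hc]; ring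
  set f : ℝ → ℝ := fun θ => r^2 + 1 - 2*r*Real.cos θ with hf
  set u : ℝ → ℝ := fun θ => Real.sin θ ^ (k+1) / ((k:ℝ)+1) with hu_def
  set v : ℝ → ℝ := fun θ => f θ ^ c with hv_def
  set u' : ℝ → ℝ := fun θ => Real.cos θ * Real.sin θ ^ k with hu'_def
  set v' : ℝ → ℝ := fun θ => c * f θ ^ (-(((k:ℝ)+2+α)/2)) * (2*r*Real.sin θ) with hv'_def
  have hK : ((k:ℝ)+1) ≠ 0 := by positivity
  have huicc : uIcc ε π = Icc ε π := uIcc_of_le hεπ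
  have hfderiv : ∀ x : ℝ, HasDerivAt f (2*r*Real.sin x) x := by
    intro x
    have h := ((Real.hasDerivAt_cos x).const_mul (2*r)).const_sub (r^2+1)
    exact h.congr_deriv (by ring)
  have hu : ∀ x ∈ uIcc ε π, HasDerivAt u (u' x) x := by
    intro x _
    have h := ((Real.hasDerivAt_sin x).pow (k+1)).div_const ((k:ℝ)+1)
    refine h.congr_deriv ?_
    symm
    simp [hu'_def]
    field_simp
  have hv : ∀ x ∈ uIcc ε π, HasDerivAt v (v' x) x := by
    intro x hx
    rw [huicc] at hx
    have h := (hfderiv x).rpow_const (p := c) (Or.inl (ne_of_gt (hw x hx)))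
    rw [hc1] at h
    convert h using 1
    simp only [hv'_def]
    ring
  have hu' : IntervalIntegrable u' volume ε π :=
    (Continuous.mul Real.continuous_cos (Real.continuous_sin.pow k)).intervalIntegrable ε π
  have hfC : ContinuousOn f (uIcc ε π) := (Continuous.continuousOn (by continuity))
  have hfne : ∀ x ∈ uIcc ε π, f x ≠ 0 ∨ 0 ≤ (-(((k:ℝ)+2+α)/2)) := by
    intro x hx; rw [huicc] at hx; exact Or.inl (ne_of_gt (hw x hx))
  have hv' : IntervalIntegrable v' volume ε π := by
    apply ContinuousOn.intervalIntegrable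
    exact (continuousOn_const.mul (hfC.rpow_const hfne)).mul
      (Continuous.continuousOn (by continuity))
  have H := integral_mul_deriv_eq_deriv_mul hu hv hu' hv'
  have huπ : u π = 0 := by simp [hu_def]
  have calc2 : ∫ θ in ε..π, u θ * v' θ
      = (2*r*c/((k:ℝ)+1)) * ∫ θ in ε..π,
          Real.sin θ ^ (k+2) * f θ ^ (-(((k:ℝ)+2+α)/2)) := by
    rw [← intervalIntegral.integral_const_mul]
    apply integral_congr
    intro x _
    simp only [hu_def, hv'_def]
    rw [pow_succ (Real.sin x) (k+1)]
    field_simp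
  have key : (∫ θ in ε..π, u' θ * v θ) = - (u ε * v ε) - ∫ θ in ε..π, u θ * v' θ := by
    rw [huπ] at H; linarith
  have goal1 : (∫ θ in ε..π, Real.cos θ * Real.sin θ ^ k * f θ ^ c)
      = ∫ θ in ε..π, u' θ * v θ := rfl
  rw [goal1, key, calc2, hu_def, hv_def]
  simp only [hc]
  ring



lemma base_lb {θ : ℝ} (h1 : 0 < θ) (h2 : θ ≤ π) : 4/π^2 * θ^2 ≤ 2 - 2*Real.cos θ := by
  have := Real.cos_le_one_sub_mul_cos_sq (x := θ) (by rw [abs_of_pos h1]; exact h2)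
  have hπ := Real.pi_pos
  have h4 : 4/π^2 * θ^2 = 2 * (2/π^2 * θ^2) := by ring
  nlinarith

lemma base_ub (θ : ℝ) : 2 - 2*Real.cos θ ≤ θ^2 := by
  have := Real.one_sub_sq_div_two_le_cos (x := θ)
  linarith

lemma base_pos {θ : ℝ} (h1 : 0 < θ) (h2 : θ ≤ π) : 0 < 2 - 2*Real.cos θ := by
  have h3 : 0 < 4/π^2 * θ^2 := by positivity
  linarith [base_lb h1 h2]

/-- upper bound on `(2-2cos θ)^c` -/
lemma rpow_base_ub {θ : ℝ} (h1 : 0 < θ) (h2 : θ ≤ π) (c : ℝ) :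
    (2 - 2*Real.cos θ) ^ c ≤ (π^2/4) ^ |c| * θ ^ (2*c) := by
  have hπ := Real.pi_pos
  have hb := base_pos h1 h2
  have hθ2 : (θ:ℝ) ^ (2*c) = (θ^2) ^ c := by
    rw [← Real.rpow_natCast θ 2, ← Real.rpow_mul h1.le]
    norm_num
  have hK1 : (1:ℝ) ≤ π^2/4 := by nlinarith [Real.pi_gt_three]
  rcases le_or_gt 0 c with hc | hc
  · have h := Real.rpow_le_rpow hb.le (base_ub θ) hc
    have hK : (1:ℝ) ≤ (π^2/4) ^ |c| := Real.one_le_rpow hK1 (abs_nonneg c)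
    rw [hθ2]
    calc (2 - 2*Real.cos θ) ^ c ≤ (θ^2) ^ c := h
    _ ≤ (π^2/4) ^ |c| * (θ^2)^c := by
        nlinarith [Real.rpow_nonneg (sq_nonneg θ) c]
  · have hpos : 0 < 4/π^2 * θ^2 := by positivity
    have h := Real.rpow_le_rpow_of_nonpos hpos (base_lb h1 h2) hc.le
    have heq : (4/π^2 * θ^2) ^ c = (π^2/4) ^ |c| * θ ^ (2*c) := by
      rw [Real.mul_rpow (by positivity) (sq_nonneg θ), hθ2, abs_of_neg hc]
      congr 1
      rw [show (4/π^2 : ℝ) = (π^2/4)⁻¹ by rw [inv_div],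
        Real.inv_rpow (by positivity), ← Real.rpow_neg (by positivity)]
    rw [← heq]; exact h

/-- lower bound on `(2-2cos θ)^c` for `c ≤ 0` -/
lemma rpow_base_lb {θ c : ℝ} (h1 : 0 < θ) (h2 : θ ≤ π) (hc : c ≤ 0) :
    (θ^2) ^ c ≤ (2 - 2*Real.cos θ) ^ c := by
  have hpos : 0 < 2 - 2*Real.cos θ := base_pos h1 h2
  exact Real.rpow_le_rpow_of_nonpos hpos (base_ub θ) hc


lemma integrableOn_aux (m : ℕ) {α : ℝ} (hα : α < 1) (A : ℝ → ℝ)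
    (hA : ContinuousOn A (Ioc 0 π)) (hA1 : ∀ x, |A x| ≤ 1) :
    IntegrableOn (fun θ => A θ * Real.sin θ^m * (2-2*Real.cos θ)^(-(((m:ℝ)+α)/2)))
      (Ioc 0 π) := by
  set c : ℝ := -(((m:ℝ)+α)/2) with hc
  set K : ℝ := (π^2/4) ^ |c| with hK
  have hπ := Real.pi_pos
  have hg : IntegrableOn (fun θ : ℝ => K * θ ^ (-α)) (Ioc 0 π) := by
    have h := intervalIntegral.intervalIntegrable_rpow' (a := 0) (b := π) (r := -α)
      (by linarith)
    rw [intervalIntegrable_iff, uIoc_of_le Real.pi_pos.le] at h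
    exact h.const_mul K
  have hmeas : AEStronglyMeasurable (fun θ => A θ * Real.sin θ^m * (2-2*Real.cos θ)^c)
      (volume.restrict (Ioc 0 π)) := by
    apply ContinuousOn.aestronglyMeasurable _ measurableSet_Ioc
    apply ContinuousOn.mul
    · exact hA.mul (Continuous.continuousOn (by continuity))
    · apply ContinuousOn.rpow_const (Continuous.continuousOn (by continuity))
      intro x hx; exact Or.inl (ne_of_gt (base_pos hx.1 hx.2))
  apply Integrable.mono' hg hmeas
  rw [ae_restrict_iff' measurableSet_Ioc]
  apply ae_of_all
  intro θ hθ
  obtain ⟨h1, h2⟩ := hθ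
  have hsin : 0 ≤ Real.sin θ := Real.sin_nonneg_of_nonneg_of_le_pi h1.le h2
  have hs2 : Real.sin θ ≤ θ := Real.sin_le h1.le
  have hbase := rpow_base_ub h1 h2 c
  have hbnn : 0 ≤ (2-2*Real.cos θ)^c := (Real.rpow_pos_of_pos (base_pos h1 h2) c).le
  have hcalc : |A θ| * Real.sin θ^m * (2-2*Real.cos θ)^c ≤ K * θ ^ (-α) := by
    have step1 : |A θ| * Real.sin θ^m ≤ 1 * θ^m :=
      mul_le_mul (hA1 θ) (pow_le_pow_left₀ hsin hs2 m) (pow_nonneg hsin m) zero_le_one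
    have step2 : |A θ| * Real.sin θ^m * (2-2*Real.cos θ)^c ≤ (1 * θ^m) * (K * θ ^ (2*c)) :=
      mul_le_mul step1 hbase hbnn (by positivity)
    refine step2.trans (le_of_eq ?_)
    rw [one_mul, ← Real.rpow_natCast θ m]
    rw [show θ^((m:ℕ):ℝ) * (K * θ^(2*c)) = K * (θ^((m:ℕ):ℝ) * θ^(2*c)) by ring,
      ← Real.rpow_add h1]
    congr 1
    rw [hc]; push_cast; ring
  rw [Real.norm_eq_abs, abs_mul, abs_mul, abs_of_nonneg hbnn,
    abs_of_nonneg (pow_nonneg hsin m)]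
  exact hcalc

lemma not_integrableOn_aux (m : ℕ) {α : ℝ} (hα : 1 ≤ α) (A : ℝ → ℝ)
    (hA : ∀ x ∈ Ioc 0 (π/3), 1/2 ≤ A x) :
    ¬ IntegrableOn (fun θ => A θ * Real.sin θ^m * (2-2*Real.cos θ)^(-(((m:ℝ)+α)/2)))
      (Ioc 0 π) := by
  intro h
  set c : ℝ := -(((m:ℝ)+α)/2) with hc
  have hπ := Real.pi_pos
  have hc0 : c ≤ 0 := by
    have : (0:ℝ) ≤ (m:ℝ) + α := by positivity
    rw [hc]; linarith
  have hsub : Ioc (0:ℝ) (π/3) ⊆ Ioc 0 π := Ioc_subset_Ioc_right (by linarith)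
  have h2 := h.mono_set hsub
  set c₀ : ℝ := (1/2) * (2/π)^m with hc₀
  have hc₀pos : 0 < c₀ := by positivity
  have hbound : ∀ θ ∈ Ioc (0:ℝ) (π/3),
      θ ^ (-α) ≤ c₀⁻¹ * (A θ * Real.sin θ^m * (2-2*Real.cos θ)^c) := by
    rintro θ ⟨h1, h2'⟩
    have hθπ : θ ≤ π := by linarith
    have hsin : 2/π * θ ≤ Real.sin θ := Real.mul_le_sin h1.le (by linarith)
    have hsinpow : (2/π)^m * θ^m ≤ Real.sin θ^m := by
      rw [← mul_pow]; exact pow_le_pow_left₀ (by positivity) hsin m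
    have hrlb : (θ^2) ^ c ≤ (2-2*Real.cos θ)^c := rpow_base_lb h1 hθπ hc0
    have hA2 := hA θ ⟨h1, h2'⟩
    have hnn1 : (0:ℝ) ≤ (2/π)^m * θ^m := by positivity
    have hnn2 : (0:ℝ) ≤ (θ^2) ^ c := Real.rpow_nonneg (sq_nonneg θ) c
    have key : c₀ * θ ^ (-α) ≤ A θ * Real.sin θ^m * (2-2*Real.cos θ)^c := by
      have step1 : (1/2) * ((2/π)^m * θ^m) ≤ A θ * Real.sin θ^m :=
        mul_le_mul hA2 hsinpow hnn1 (le_trans (by norm_num) hA2)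
      have step2 : ((1/2) * ((2/π)^m * θ^m)) * ((θ^2)^c)
          ≤ (A θ * Real.sin θ^m) * (2-2*Real.cos θ)^c :=
        mul_le_mul step1 hrlb hnn2 (le_trans (by positivity) step1)
      refine le_trans (le_of_eq ?_) step2
      have hθ2 : (θ^2 : ℝ)^c = θ^(2*c) := by
        rw [← Real.rpow_natCast θ 2, ← Real.rpow_mul h1.le]; norm_num
      rw [hθ2, hc₀, ← Real.rpow_natCast θ m]
      rw [show (1/2) * (2/π)^m * θ^(-α) = (1/2) * ((2/π)^m * θ^(-α)) by ring,
        show (1/2) * ((2/π)^m * θ^((m:ℕ):ℝ)) * θ^(2*c) = (1/2) * ((2/π)^m * (θ^((m:ℕ):ℝ) * θ^(2*c))) by ring,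
        ← Real.rpow_add h1]
      congr 2
      rw [hc]; push_cast; ring
    calc θ ^ (-α) = c₀⁻¹ * (c₀ * θ ^ (-α)) := by field_simp
    _ ≤ c₀⁻¹ * (A θ * Real.sin θ^m * (2-2*Real.cos θ)^c) :=
        mul_le_mul_of_nonneg_left key (inv_nonneg.mpr hc₀pos.le)
  have hint : IntegrableOn (fun θ:ℝ => θ ^ (-α)) (Ioc 0 (π/3)) := by
    apply Integrable.mono' (h2.const_mul c₀⁻¹)
    · apply ContinuousOn.aestronglyMeasurable _ measurableSet_Ioc
      apply ContinuousOn.rpow_const continuousOn_id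
      intro x hx; exact Or.inl (ne_of_gt hx.1)
    · rw [ae_restrict_iff' measurableSet_Ioc]
      apply ae_of_all
      intro θ hθ
      rw [Real.norm_eq_abs, abs_of_nonneg (Real.rpow_nonneg hθ.1.le _)]
      exact hbound θ hθ
  have := hint.mono_set Ioo_subset_Ioc_self
  rw [integrableOn_Ioo_rpow_iff (by linarith : (0:ℝ) < π/3)] at this
  linarith

end Stmt0Aux

open Real intervalIntegral
open Stmt0Aux MeasureTheory Set Filter Topology

/-- Integration by parts form of the kernel `g` (d ≥ 2). -/
theorem stmt_0 (d : ℕ) (hd : 2 ≤ d) (α : ℝ) (σ : ℝ) (hσ : 0 < σ) (r : ℝ) (hr : 0 ≤ r) :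
    σ * ∫ θ in (0:ℝ)..π,
        Real.cos θ * Real.sin θ ^ (d - 2) / (r ^ 2 + 1 - 2 * r * Real.cos θ) ^ (((d : ℝ) - 2 + α) / 2)
    = σ * r * (((d : ℝ) - 2 + α) / ((d : ℝ) - 1)) *
      ∫ θ in (0:ℝ)..π,
        Real.sin θ ^ d / (r ^ 2 + 1 - 2 * r * Real.cos θ) ^ (((d : ℝ) + α) / 2) := by
  obtain ⟨k, rfl⟩ : ∃ k, d = k + 2 := ⟨d - 2, by omega⟩
  have hπ := Real.pi_pos
  have hsub : k + 2 - 2 = k := by omega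
  set c1 : ℝ := -(((k:ℝ)+α)/2) with hc1
  set c2 : ℝ := -(((k:ℝ)+2+α)/2) with hc2
  have hE1 : (((k+2:ℕ):ℝ)-2+α)/2 = -c1 := by rw [hc1]; push_cast; ring
  have hE2 : (((k+2:ℕ):ℝ)+α)/2 = -c2 := by rw [hc2]; push_cast; ring
  have hL : (∫ θ in (0:ℝ)..π, Real.cos θ * Real.sin θ ^ (k+2-2)
        / (r^2+1-2*r*Real.cos θ) ^ ((((k+2:ℕ):ℝ)-2+α)/2))
      = ∫ θ in (0:ℝ)..π, Real.cos θ * Real.sin θ ^ k * (r^2+1-2*r*Real.cos θ) ^ c1 := by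
    apply integral_congr; intro x _
    simp only [hsub, hE1]
    rw [div_eq_mul_inv, ← Real.rpow_neg (w_nonneg r x), neg_neg]
  have hR : (∫ θ in (0:ℝ)..π, Real.sin θ ^ (k+2)
        / (r^2+1-2*r*Real.cos θ) ^ ((((k+2:ℕ):ℝ)+α)/2))
      = ∫ θ in (0:ℝ)..π, Real.sin θ ^ (k+2) * (r^2+1-2*r*Real.cos θ) ^ c2 := by
    apply integral_congr; intro x _
    simp only [hE2]
    rw [div_eq_mul_inv, ← Real.rpow_neg (w_nonneg r x), neg_neg]
  rw [hL, hR]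
  have hS : (((k+2:ℕ):ℝ)-2+α)/(((k+2:ℕ):ℝ)-1) = ((k:ℝ)+α)/((k:ℝ)+1) := by
    push_cast; ring_nf
  rw [hS]
  suffices key : (∫ θ in (0:ℝ)..π, Real.cos θ * Real.sin θ ^ k * (r^2+1-2*r*Real.cos θ) ^ c1)
      = r * ((k:ℝ)+α) / ((k:ℝ)+1) *
        ∫ θ in (0:ℝ)..π, Real.sin θ ^ (k+2) * (r^2+1-2*r*Real.cos θ) ^ c2 by
    rw [key]; ring
  by_cases hr1 : r = 1
  · subst hr1
    have hbase : ∀ x:ℝ, (1:ℝ)^2+1-2*1*Real.cos x = 2-2*Real.cos x := fun x => by ring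
    rcases lt_or_ge α 1 with hα | hα
    · -- integrable case: limit argument
      set f : ℝ → ℝ := fun θ => Real.cos θ * Real.sin θ ^ k * ((1:ℝ)^2+1-2*1*Real.cos θ) ^ c1 with hfdef
      set h : ℝ → ℝ := fun θ => Real.sin θ ^ (k+2) * ((1:ℝ)^2+1-2*1*Real.cos θ) ^ c2 with hhdef
      have hfInt : IntegrableOn f (Ioc 0 π) := by
        have h0 := integrableOn_aux k hα Real.cos Real.continuous_cos.continuousOn
          Real.abs_cos_le_one
        refine h0.congr_fun (fun x _ => ?_) measurableSet_Ioc
        rw [hfdef]; simp only [hbase]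
        rw [hc1]
      have hhInt : IntegrableOn h (Ioc 0 π) := by
        have h0 := integrableOn_aux (k+2) hα (fun _ => 1) continuousOn_const
          (fun x => by norm_num)
        refine h0.congr_fun (fun x _ => ?_) measurableSet_Ioc
        rw [hhdef]; simp only [hbase, one_mul]
        congr 2
        rw [hc2]; push_cast; ring
      have hfIcc : IntegrableOn f (Icc 0 π) := (integrableOn_Icc_iff_integrableOn_Ioc).mpr hfInt
      have hhIcc : IntegrableOn h (Icc 0 π) := (integrableOn_Icc_iff_integrableOn_Ioc).mpr hhInt
      have hFcont := intervalIntegral.continuousOn_primitive_interval_left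
        (f := f) (μ := volume) (a := 0) (b := π) (by rwa [uIcc_of_le hπ.le])
      have hHcont := intervalIntegral.continuousOn_primitive_interval_left
        (f := h) (μ := volume) (a := 0) (b := π) (by rwa [uIcc_of_le hπ.le])
      have hNe : (𝓝[Ioo (0:ℝ) π] 0).NeBot := by
        apply mem_closure_iff_nhdsWithin_neBot.mp
        rw [closure_Ioo (ne_of_lt hπ)]
        exact ⟨le_refl 0, hπ.le⟩
      have hIooSub : Ioo (0:ℝ) π ⊆ uIcc 0 π := by
        rw [uIcc_of_le hπ.le]; exact Ioo_subset_Icc_self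
      have h0mem : (0:ℝ) ∈ uIcc (0:ℝ) π := left_mem_uIcc
      have tend1 : Tendsto (fun ε => ∫ t in ε..π, f t) (𝓝[Ioo (0:ℝ) π] 0)
          (𝓝 (∫ t in (0:ℝ)..π, f t)) :=
        ((hFcont 0 h0mem).tendsto).mono_left (nhdsWithin_mono 0 hIooSub)
      have tend2 : Tendsto (fun ε => ∫ t in ε..π, h t) (𝓝[Ioo (0:ℝ) π] 0)
          (𝓝 (∫ t in (0:ℝ)..π, h t)) :=
        ((hHcont 0 h0mem).tendsto).mono_left (nhdsWithin_mono 0 hIooSub)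
      set bd : ℝ → ℝ := fun ε =>
        Real.sin ε ^ (k+1) * ((1:ℝ)^2+1-2*1*Real.cos ε) ^ c1 / ((k:ℝ)+1) with hbd
      have tendbd : Tendsto bd (𝓝[Ioo (0:ℝ) π] 0) (𝓝 0) := by
        set K : ℝ := (π^2/4) ^ |c1| with hKdef
        have hKpos : (0:ℝ) < K := Real.rpow_pos_of_pos (by positivity) _
        have hg0 : Tendsto (fun ε : ℝ => K / ((k:ℝ)+1) * ε ^ (1-α)) (𝓝[Ioo (0:ℝ) π] 0)
            (𝓝 0) := by
          have hcont := (Real.continuousAt_rpow_const 0 (1-α) (Or.inr (by linarith))).tendsto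
          rw [Real.zero_rpow (by linarith : (1:ℝ)-α ≠ 0)] at hcont
          have := hcont.const_mul (K / ((k:ℝ)+1))
          rw [mul_zero] at this
          exact this.mono_left nhdsWithin_le_nhds
        apply squeeze_zero' ?_ ?_ hg0
        · filter_upwards [self_mem_nhdsWithin] with ε hε
          simp only [hbd, hbase]
          have hs : 0 ≤ Real.sin ε := Real.sin_nonneg_of_nonneg_of_le_pi hε.1.le hε.2.le
          exact div_nonneg (mul_nonneg (pow_nonneg hs _)
            (Real.rpow_pos_of_pos (base_pos hε.1 hε.2.le) c1).le) (by positivity)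
        · filter_upwards [self_mem_nhdsWithin] with ε hε
          obtain ⟨hε1, hε2⟩ := hε
          simp only [hbd, hbase]
          have hsin : 0 ≤ Real.sin ε := Real.sin_nonneg_of_nonneg_of_le_pi hε1.le hε2.le
          have hub := rpow_base_ub hε1 hε2.le c1
          have hbnn : 0 ≤ (2-2*Real.cos ε) ^ c1 :=
            (Real.rpow_pos_of_pos (base_pos hε1 hε2.le) c1).le
          have step : Real.sin ε ^ (k+1) * (2-2*Real.cos ε) ^ c1
              ≤ ε^(k+1) * (K * ε ^ (2*c1)) :=
            mul_le_mul (pow_le_pow_left₀ hsin (Real.sin_le hε1.le) (k+1)) hub hbnn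
              (by positivity)
          have heq : ε^(k+1) * (K * ε ^ (2*c1)) = K * ε ^ (1-α) := by
            rw [← Real.rpow_natCast ε (k+1),
              show ε^((k+1:ℕ):ℝ) * (K * ε^(2*c1)) = K * (ε^((k+1:ℕ):ℝ) * ε^(2*c1)) by ring,
              ← Real.rpow_add hε1]
            congr 1
            rw [hc1]; push_cast; ring
          rw [div_le_iff₀ (by positivity : (0:ℝ) < (k:ℝ)+1)]
          calc Real.sin ε ^ (k+1) * (2-2*Real.cos ε) ^ c1 ≤ K * ε ^ (1-α) := by
                rw [← heq]; exact step
          _ = K / ((k:ℝ)+1) * ε ^ (1-α) * ((k:ℝ)+1) := by field_simp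
      have hident : ∀ᶠ ε in 𝓝[Ioo (0:ℝ) π] 0,
          (∫ t in ε..π, f t) = -(bd ε) + 1 * ((k:ℝ)+α) / ((k:ℝ)+1) * ∫ t in ε..π, h t := by
        filter_upwards [self_mem_nhdsWithin] with ε hε
        have := ibp k α 1 ε hε.2.le (fun θ hθ => by
          have h1 : 0 < θ := lt_of_lt_of_le hε.1 hθ.1
          exact w_pos_of_pos (by norm_num) (cos_lt_one_of_mem h1 hθ.2))
        rw [hfdef, hhdef, hbd]
        convert this using 2
      have tendRHS : Tendsto (fun ε => -(bd ε) + 1 * ((k:ℝ)+α) / ((k:ℝ)+1) * ∫ t in ε..π, h t)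
          (𝓝[Ioo (0:ℝ) π] 0)
          (𝓝 (-(0:ℝ) + 1 * ((k:ℝ)+α) / ((k:ℝ)+1) * ∫ t in (0:ℝ)..π, h t)) :=
        (tendbd.neg).add (tend2.const_mul _)
      have := tendsto_nhds_unique (tend1.congr' hident) tendRHS
      rw [this]
      ring
    · -- non-integrable case: both sides are zero
      have hA0 : (∫ θ in (0:ℝ)..π,
          Real.cos θ * Real.sin θ ^ k * ((1:ℝ)^2+1-2*1*Real.cos θ) ^ c1) = 0 := by
        apply intervalIntegral.integral_undef
        rw [intervalIntegrable_iff, uIoc_of_le hπ.le]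
        intro hcontra
        apply not_integrableOn_aux k hα Real.cos ?_
        · refine hcontra.congr_fun (fun x _ => ?_) measurableSet_Ioc
          simp only [hbase]
          rw [hc1]
        · intro x hx
          have h3 : Real.cos (π/3) ≤ Real.cos x := by
            apply Real.cos_le_cos_of_nonneg_of_le_pi hx.1.le (by linarith) hx.2
          rwa [Real.cos_pi_div_three] at h3
      have hB0 : (∫ θ in (0:ℝ)..π,
          Real.sin θ ^ (k+2) * ((1:ℝ)^2+1-2*1*Real.cos θ) ^ c2) = 0 := by
        apply intervalIntegral.integral_undef
        rw [intervalIntegrable_iff, uIoc_of_le hπ.le]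
        intro hcontra
        apply not_integrableOn_aux (k+2) hα (fun _ => (1:ℝ)) ?_
        · refine hcontra.congr_fun (fun x _ => ?_) measurableSet_Ioc
          simp only [hbase, one_mul]
          congr 2
          rw [hc2]; push_cast; ring
        · intro x _; norm_num
      rw [hA0, hB0]
      ring
  · -- r ≠ 1 : direct integration by parts on [0, π]
    have H := ibp k α r 0 hπ.le (fun θ _ => w_pos_of_ne hr hr1 θ)
    simp only [Real.sin_zero, zero_pow (Nat.succ_ne_zero k), zero_mul, zero_div, neg_zero,
      zero_add] at H
    exact H
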